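/- Let G be a σ-pro-p-group, let ε ∈ {+1,−1}, and let a ∈ G be such that σ(a) is conjugate in G to a^ε. Then there exists b ∈ G^ε that is conjugate in G to a; moreover, any two elements of G^ε that are conjugate in G to a are conjugate to each other by an element of G⁺. -/

import Mathlib

private lemma finsetInvolFixed {α : Type*} [DecidableEq α] :
    ∀ n : ℕ, ∀ s : Finset α, s.card ≤ n → ∀ f : α → α, (∀ x ∈ s, f x ∈ s) →
      (∀ x ∈ s, f (f x) = x) → Odd s.card → ∃ x ∈ s, f x = x := by
  intro n
  induction n with
  | zero =>
    intro s hs f _ _ hodd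
    rcases hodd with ⟨k, hk⟩; omega
  | succ n ih =>
    intro s hs f hmap hinv hodd
    by_cases hfix : ∃ x ∈ s, f x = x
    · exact hfix
    · exfalso
      push_neg at hfix
      have hpos : 0 < s.card := by rcases hodd with ⟨k, hk⟩; omega
      obtain ⟨x, hx⟩ := Finset.card_pos.mp hpos
      have hfx : f x ∈ s := hmap x hx
      have hne : f x ≠ x := hfix x hx
      have hpair : ({x, f x} : Finset α) ⊆ s := by
        intro y hy
        rcases Finset.mem_insert.mp hy with h | h
        · exact h ▸ hx
        · exact (Finset.mem_singleton.mp h) ▸ hfx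
      have hpaircard : ({x, f x} : Finset α).card = 2 := by
        rw [Finset.card_insert_of_notMem (by simp only [Finset.mem_singleton]; exact fun h => hne h.symm),
          Finset.card_singleton]
      set s' := s \ {x, f x} with hs'def
      have hsub : s' ⊆ s := Finset.sdiff_subset
      have hcard : s'.card = s.card - 2 := by
        rw [hs'def, Finset.card_sdiff_of_subset hpair, hpaircard]
      have hge : 2 ≤ s.card := hpaircard ▸ Finset.card_le_card hpair
      have hmem' : ∀ y, y ∈ s' ↔ (y ∈ s ∧ y ≠ x ∧ y ≠ f x) := by
        intro y
        simp only [hs'def, Finset.mem_sdiff, Finset.mem_insert, Finset.mem_singleton, not_or]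
      have hmap' : ∀ y ∈ s', f y ∈ s' := by
        intro y hy
        obtain ⟨hys, hyx, hyfx⟩ := (hmem' y).mp hy
        refine (hmem' (f y)).mpr ⟨hmap y hys, ?_, ?_⟩
        · intro h; exact hyfx (by rw [← hinv y hys, h])
        · intro h
          have : y = x := by rw [← hinv y hys, h, hinv x hx]
          exact hyx this
      have hodd' : Odd s'.card := by
        rcases hodd with ⟨k, hk⟩
        exact ⟨k - 1, by omega⟩
      obtain ⟨y, hy, hfy⟩ := ih s' (by omega) f hmap' (fun y hy => hinv y (hsub hy)) hodd'
      exact hfix y (hsub hy) hfy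

private lemma setInvolFixed {α : Type*} {S : Set α} (hfin : S.Finite) (f : α → α)
    (hmap : ∀ x ∈ S, f x ∈ S) (hinv : ∀ x ∈ S, f (f x) = x) (hodd : Odd (Nat.card S)) :
    ∃ x ∈ S, f x = x := by
  classical
  have hcard : Nat.card S = hfin.toFinset.card := by
    rw [Nat.card_coe_set_eq, Set.ncard_eq_toFinset_card _ hfin]
  obtain ⟨x, hx, hfx⟩ := finsetInvolFixed hfin.toFinset.card hfin.toFinset le_rfl f
    (fun x hx => hfin.mem_toFinset.mpr (hmap x (hfin.mem_toFinset.mp hx)))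
    (fun x hx => hinv x (hfin.mem_toFinset.mp hx)) (hcard ▸ hodd)
  exact ⟨x, hfin.mem_toFinset.mp hx, hfx⟩

private lemma existsFixedOfApprox {G : Type*} [Group G] [TopologicalSpace G]
    [IsTopologicalGroup G] [CompactSpace G] [T2Space G] [TotallyDisconnectedSpace G]
    {X : Set G} (hX : IsClosed X) {f : G → G} (hf : Continuous f)
    (happ : ∀ N : Subgroup G, N.Normal → IsOpen (N : Set G) → ∃ x ∈ X, f x * x⁻¹ ∈ N) :
    ∃ x ∈ X, f x = x := by
  let ι := {N : Subgroup G // N.Normal ∧ IsOpen (N : Set G)}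
  haveI : Nonempty ι := ⟨⟨⊤, inferInstance, by rw [Subgroup.coe_top]; exact isOpen_univ⟩⟩
  let F : ι → Set G := fun N => X ∩ ((fun x => f x * x⁻¹) ⁻¹' (N.1 : Set G))
  have hFclosed : ∀ N : ι, IsClosed (F N) := fun N =>
    hX.inter (IsClosed.preimage (hf.mul continuous_inv)
      (Subgroup.isClosed_of_isOpen N.1 N.2.2))
  have hFne : ∀ N : ι, (F N).Nonempty := by
    intro N
    obtain ⟨x, hx1, hx2⟩ := happ N.1 N.2.1 N.2.2
    exact ⟨x, hx1, hx2⟩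
  have hdir : Directed (· ⊇ ·) F := by
    intro i j
    have hn : (i.1 ⊓ j.1).Normal := by
      constructor
      intro m hm g
      obtain ⟨h1, h2⟩ := Subgroup.mem_inf.mp hm
      exact Subgroup.mem_inf.mpr ⟨i.2.1.conj_mem m h1 g, j.2.1.conj_mem m h2 g⟩
    have ho : IsOpen ((i.1 ⊓ j.1 : Subgroup G) : Set G) := by
      rw [Subgroup.coe_inf]; exact i.2.2.inter j.2.2
    refine ⟨⟨i.1 ⊓ j.1, hn, ho⟩, ?_, ?_⟩
    · intro x hx
      exact ⟨hx.1, (Subgroup.mem_inf.mp hx.2).1⟩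
    · intro x hx
      exact ⟨hx.1, (Subgroup.mem_inf.mp hx.2).2⟩
  obtain ⟨x, hx⟩ := IsCompact.nonempty_iInter_of_directed_nonempty_isCompact_isClosed F hdir hFne
    (fun N => (hFclosed N).isCompact) hFclosed
  simp only [Set.mem_iInter] at hx
  have hxX : x ∈ X := (hx (Classical.arbitrary ι)).1
  refine ⟨x, hxX, ?_⟩
  by_contra hneq
  have hz : f x * x⁻¹ ≠ 1 := fun h => hneq (by rwa [mul_inv_eq_one] at h)
  obtain ⟨W, hWclopen, hW1, hWsub⟩ := compact_exists_isClopen_in_isOpen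
    (isOpen_compl_singleton (x := f x * x⁻¹)) (fun h => hz (Set.mem_singleton_iff.mp h).symm)
  obtain ⟨H, hH⟩ := IsTopologicalGroup.exist_openNormalSubgroup_sub_clopen_nhds_of_one hWclopen hW1
  have hmem := (hx ⟨H.toOpenSubgroup.toSubgroup, H.isNormal', H.toOpenSubgroup.isOpen'⟩).2
  exact hWsub (hH hmem) rfl

private lemma shrinkInvariant {G : Type*} [Group G] [TopologicalSpace G]
    (σ : G ≃* G) (hσcont : Continuous σ) (hσ : ∀ a, σ (σ a) = a)
    (N : Subgroup G) (hNn : N.Normal) (hNo : IsOpen (N : Set G)) :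
    ∃ M : Subgroup G, M.Normal ∧ IsOpen (M : Set G) ∧ M ≤ N ∧ ∀ x ∈ M, σ x ∈ M := by
  refine ⟨N ⊓ N.comap σ.toMonoidHom, ?_, ?_, inf_le_left, ?_⟩
  · constructor
    intro m hm g
    obtain ⟨h1, h2⟩ := Subgroup.mem_inf.mp hm
    rw [Subgroup.mem_comap] at h2
    refine Subgroup.mem_inf.mpr ⟨hNn.conj_mem m h1 g, Subgroup.mem_comap.mpr ?_⟩
    simpa [map_mul, map_inv] using hNn.conj_mem (σ m) h2 (σ g)
  · have hcoe : ((N ⊓ N.comap σ.toMonoidHom : Subgroup G) : Set G)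
        = (N : Set G) ∩ (⇑σ ⁻¹' (N : Set G)) := by
      rw [Subgroup.coe_inf, Subgroup.coe_comap]
      rfl
    rw [hcoe]
    exact hNo.inter (hNo.preimage hσcont)
  · intro x hx
    obtain ⟨h1, h2⟩ := Subgroup.mem_inf.mp hx
    rw [Subgroup.mem_comap] at h2
    refine Subgroup.mem_inf.mpr ⟨h2, Subgroup.mem_comap.mpr ?_⟩
    show σ (σ x) ∈ N
    rw [hσ]
    exact h1

private lemma oddOfDvd {m n : ℕ} (h : m ∣ n) (hn : Odd n) : Odd m := by
  rcases Nat.even_or_odd m with he | ho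
  · obtain ⟨k, rfl⟩ := h
    exact absurd (he.mul_right k) (Nat.not_even_iff_odd.mpr hn)
  · exact ho

private lemma approx1 {G : Type*} [Group G] [TopologicalSpace G] [IsTopologicalGroup G]
    [CompactSpace G] {p : ℕ} (hodd : Odd p)
    (hGpro : ∀ U : Subgroup G, U.Normal → IsOpen (U : Set G) → ∃ n : ℕ, U.index = p ^ n)
    (σ : G ≃* G) (hσ : ∀ a, σ (σ a) = a)
    {ε : ℤ} (hεε : ε * ε = 1)
    (a c : G) (hc : c * σ a * c⁻¹ = a ^ ε)
    (M : Subgroup G) (hMn : M.Normal) (hMo : IsOpen (M : Set G)) (hMσ : ∀ x ∈ M, σ x ∈ M) :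
    ∃ x, IsConj a x ∧ (σ x) ^ ε * x⁻¹ ∈ M := by
  haveI := hMn
  haveI : Finite (G ⧸ M) := Subgroup.quotient_finite_of_isOpen M hMo
  let mk : G →* G ⧸ M := QuotientGroup.mk' M
  have hmksurj := QuotientGroup.mk'_surjective M
  have hker : M ≤ (mk.comp σ.toMonoidHom).ker := by
    intro x hx
    exact (QuotientGroup.eq_one_iff _).mpr (hMσ x hx)
  let σb : G ⧸ M →* G ⧸ M := QuotientGroup.lift M (mk.comp σ.toMonoidHom) hker
  have hσb : ∀ g : G, σb (mk g) = mk (σ g) := fun g => rfl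
  have hσbσb : ∀ q : G ⧸ M, σb (σb q) = q := by
    intro q
    obtain ⟨g, rfl⟩ := hmksurj q
    rw [hσb, hσb, hσ]
  have hoddQ : Odd (Nat.card (G ⧸ M)) := by
    obtain ⟨n, hn⟩ := hGpro M hMn hMo
    rw [← Subgroup.index_eq_card, hn]
    exact hodd.pow
  set S : Set (G ⧸ M) := MulAction.orbit (ConjAct (G ⧸ M)) (mk a) with hSdef
  have hSmem : ∀ q, q ∈ S ↔ IsConj q (mk a) := fun q => ConjAct.mem_orbit_conjAct
  let f : G ⧸ M → G ⧸ M := fun q => (σb q) ^ ε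
  have hσa : (σ a) ^ ε = c⁻¹ * a * c := by
    have h0 : σ a = c⁻¹ * a ^ ε * c := by rw [← hc]; group
    calc (σ a) ^ ε = (c⁻¹ * a ^ ε * (c⁻¹)⁻¹) ^ ε := by rw [inv_inv, ← h0]
      _ = c⁻¹ * (a ^ ε) ^ ε * (c⁻¹)⁻¹ := conj_zpow
      _ = c⁻¹ * a * c := by rw [← zpow_mul, hεε, zpow_one, inv_inv]
  have hfS : ∀ q ∈ S, f q ∈ S := by
    intro q hq
    rw [hSmem] at hq ⊢
    obtain ⟨u, hu⟩ := isConj_iff.mp hq.symm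
    have h1 : σb q = σb u * mk (σ a) * (σb u)⁻¹ := by
      rw [← hu, map_mul, map_mul, map_inv, hσb]
    have key : (σb u * (mk c)⁻¹) * mk a * (σb u * (mk c)⁻¹)⁻¹ = f q := by
      show _ = (σb q) ^ ε
      rw [h1, conj_zpow, ← map_zpow, hσa, map_mul, map_mul, map_inv]
      group
    exact (isConj_iff.mpr ⟨_, key⟩).symm
  have hinvS : ∀ q ∈ S, f (f q) = q := by
    intro q _
    show (σb ((σb q) ^ ε)) ^ ε = q
    rw [map_zpow, ← zpow_mul, hεε, zpow_one, hσbσb]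
  have hcardS : Nat.card S ∣ Nat.card (G ⧸ M) := by
    have h1 : Nat.card S
        = Nat.card (ConjAct (G ⧸ M) ⧸ MulAction.stabilizer (ConjAct (G ⧸ M)) (mk a)) :=
      Nat.card_congr (MulAction.orbitEquivQuotientStabilizer (ConjAct (G ⧸ M)) (mk a))
    have h2 : Nat.card (ConjAct (G ⧸ M)) = Nat.card (G ⧸ M) :=
      Nat.card_congr ConjAct.toConjAct.toEquiv.symm
    calc Nat.card S = (MulAction.stabilizer (ConjAct (G ⧸ M)) (mk a)).index := by
          rw [Subgroup.index_eq_card]; exact h1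
      _ ∣ Nat.card (ConjAct (G ⧸ M)) := Subgroup.index_dvd_card _
      _ = Nat.card (G ⧸ M) := h2
  obtain ⟨q, hqS, hq⟩ := setInvolFixed (Set.toFinite S) f hfS hinvS (oddOfDvd hcardS hoddQ)
  rw [hSmem] at hqS
  obtain ⟨v, hv⟩ := isConj_iff.mp hqS.symm
  obtain ⟨u, hu⟩ := hmksurj v
  refine ⟨u * a * u⁻¹, isConj_iff.mpr ⟨u, rfl⟩, ?_⟩
  have hmkx : mk (u * a * u⁻¹) = q := by rw [map_mul, map_mul, map_inv, hu, hv]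
  have : mk ((σ (u * a * u⁻¹)) ^ ε * (u * a * u⁻¹)⁻¹) = 1 := by
    rw [map_mul, map_zpow, ← hσb, map_inv, hmkx]
    show f q * q⁻¹ = 1
    rw [hq, mul_inv_cancel]
  exact (QuotientGroup.eq_one_iff _).mp this

private lemma approx2 {G : Type*} [Group G] [TopologicalSpace G] [IsTopologicalGroup G]
    [CompactSpace G] {p : ℕ} (hodd : Odd p)
    (hGpro : ∀ U : Subgroup G, U.Normal → IsOpen (U : Set G) → ∃ n : ℕ, U.index = p ^ n)
    (σ : G ≃* G) (hσ : ∀ a, σ (σ a) = a) (b c : G)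
    (hHσ : ∀ t ∈ Subgroup.centralizer ({b} : Set G), σ t ∈ Subgroup.centralizer ({b} : Set G))
    (hσc : σ c ∈ (fun t => c * t) '' (Subgroup.centralizer ({b} : Set G) : Set G))
    (M : Subgroup G) (hMn : M.Normal) (hMo : IsOpen (M : Set G)) (hMσ : ∀ x ∈ M, σ x ∈ M) :
    ∃ x ∈ (fun t => c * t) '' (Subgroup.centralizer ({b} : Set G) : Set G), σ x * x⁻¹ ∈ M := by
  haveI := hMn
  haveI : Finite (G ⧸ M) := Subgroup.quotient_finite_of_isOpen M hMo
  set H := Subgroup.centralizer ({b} : Set G) with hHdef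
  set X : Set G := (fun t => c * t) '' (H : Set G) with hXdef
  let mk : G →* G ⧸ M := QuotientGroup.mk' M
  have hmksurj := QuotientGroup.mk'_surjective M
  have hker : M ≤ (mk.comp σ.toMonoidHom).ker := by
    intro x hx
    exact (QuotientGroup.eq_one_iff _).mpr (hMσ x hx)
  let σb : G ⧸ M →* G ⧸ M := QuotientGroup.lift M (mk.comp σ.toMonoidHom) hker
  have hσb : ∀ g : G, σb (mk g) = mk (σ g) := fun g => rfl
  have hoddQ : Odd (Nat.card (G ⧸ M)) := by
    obtain ⟨n, hn⟩ := hGpro M hMn hMo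
    rw [← Subgroup.index_eq_card, hn]
    exact hodd.pow
  -- X is σ-stable
  have hXσ : ∀ x ∈ X, σ x ∈ X := by
    rintro x ⟨t, ht, rfl⟩
    obtain ⟨s, hs, hcs⟩ := hσc
    refine ⟨s * σ t, H.mul_mem hs (hHσ t ht), ?_⟩
    show c * (s * σ t) = σ (c * t)
    rw [map_mul, ← hcs]
    group
  set S : Set (G ⧸ M) := ⇑mk '' X with hSdef
  have hfS : ∀ q ∈ S, σb q ∈ S := by
    rintro q ⟨x, hx, rfl⟩
    exact ⟨σ x, hXσ x hx, (hσb x).symm⟩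
  have hinvS : ∀ q ∈ S, σb (σb q) = q := by
    rintro q ⟨x, hx, rfl⟩
    rw [hσb, hσb, hσ]
  have hcardS : Nat.card S ∣ Nat.card (G ⧸ M) := by
    have hSeq : S = (fun q => mk c * q) '' ((H.map mk : Subgroup (G ⧸ M)) : Set (G ⧸ M)) := by
      rw [hSdef, hXdef, Subgroup.coe_map, ← Set.image_comp, ← Set.image_comp]
      apply congrArg (· '' (H : Set G))
      funext t
      show mk (c * t) = mk c * mk t
      rw [map_mul]
    have h1 : Nat.card S = Nat.card (H.map mk) := by
      rw [Nat.card_coe_set_eq, hSeq,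
        Set.ncard_image_of_injective _ (mul_right_injective (mk c)),
        ← Nat.card_coe_set_eq]
      rfl
    rw [h1]
    exact Subgroup.card_subgroup_dvd_card _
  obtain ⟨q, hqS, hq⟩ := setInvolFixed (Set.toFinite S) σb hfS hinvS (oddOfDvd hcardS hoddQ)
  obtain ⟨x, hxX, rfl⟩ := hqS
  refine ⟨x, hxX, ?_⟩
  have : mk (σ x * x⁻¹) = 1 := by
    rw [map_mul, map_inv, ← hσb, hq, mul_inv_cancel]
  exact (QuotientGroup.eq_one_iff _).mp this

/-- Let `G` be a `σ`-pro-`p`-group, `ε ∈ {+1, −1}`, and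
`a ∈ G` with `σ(a)` conjugate in `G` to `a^ε`. Then there exists `b ∈ G^ε`
conjugate in `G` to `a`; moreover any two elements of `G^ε` that are conjugate
in `G` to `a` are conjugate to each other by an element of `G⁺`. -/
theorem sigma_pro_p_group_conj_to_part
    {p : ℕ} (hp : p.Prime) (hodd : Odd p)
    {G : Type*} [Group G] [TopologicalSpace G] [IsTopologicalGroup G]
    [CompactSpace G] [T2Space G] [TotallyDisconnectedSpace G]
    (hGpro : ∀ U : Subgroup G, U.Normal → IsOpen (U : Set G) → ∃ n : ℕ, U.index = p ^ n)
    (σ : G ≃* G) (hσcont : Continuous σ) (hσ : ∀ a, σ (σ a) = a)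
    (ε : ℤ) (hε : ε = 1 ∨ ε = -1)
    (a : G) (ha : IsConj (σ a) (a ^ ε)) :
    (∃ b : G, σ b = b ^ ε ∧ IsConj a b) ∧
    ∀ b b' : G, σ b = b ^ ε → σ b' = b' ^ ε → IsConj a b → IsConj a b' →
      ∃ d : G, σ d = d ∧ d * b * d⁻¹ = b' := by
  have hεε : ε * ε = 1 := by rcases hε with h | h <;> simp [h]
  obtain ⟨c, hc⟩ := isConj_iff.mp ha
  constructor
  · -- existence
    have hXclosed : IsClosed (Set.range fun u : G => u * a * u⁻¹) :=
      (isCompact_range (by continuity)).isClosed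
    have happ : ∀ N : Subgroup G, N.Normal → IsOpen (N : Set G) →
        ∃ x ∈ Set.range (fun u : G => u * a * u⁻¹), (σ x) ^ ε * x⁻¹ ∈ N := by
      intro N hNn hNo
      obtain ⟨M, hMn, hMo, hMle, hMσ⟩ := shrinkInvariant σ hσcont hσ N hNn hNo
      obtain ⟨x, hx1, hx2⟩ := approx1 hodd hGpro σ hσ hεε a c hc M hMn hMo hMσ
      obtain ⟨u, hu⟩ := isConj_iff.mp hx1
      exact ⟨x, ⟨u, hu⟩, hMle hx2⟩
    obtain ⟨x, hxX, hxfix⟩ := existsFixedOfApprox hXclosed (f := fun y => (σ y) ^ ε)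
      ((hσcont.zpow ε)) happ
    obtain ⟨u, hu⟩ := hxX
    refine ⟨x, ?_, isConj_iff.mpr ⟨u, hu⟩⟩
    calc σ x = ((σ x) ^ ε) ^ ε := by rw [← zpow_mul, hεε, zpow_one]
      _ = x ^ ε := by rw [hxfix]
  · -- uniqueness
    intro b b' hb hb' hab hab'
    obtain ⟨c₀, hc₀⟩ := isConj_iff.mp (hab.symm.trans hab')
    have hσc₀ : σ c₀ * b * (σ c₀)⁻¹ = b' := by
      have h1 : σ c₀ * b ^ ε * (σ c₀)⁻¹ = b' ^ ε := by
        have := congrArg σ hc₀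
        rwa [map_mul, map_mul, map_inv, hb, hb'] at this
      calc σ c₀ * b * (σ c₀)⁻¹ = σ c₀ * (b ^ ε) ^ ε * (σ c₀)⁻¹ := by
            rw [← zpow_mul, hεε, zpow_one]
        _ = (σ c₀ * b ^ ε * (σ c₀)⁻¹) ^ ε := conj_zpow.symm
        _ = (b' ^ ε) ^ ε := by rw [h1]
        _ = b' := by rw [← zpow_mul, hεε, zpow_one]
    have hHσ : ∀ t ∈ Subgroup.centralizer ({b} : Set G),
        σ t ∈ Subgroup.centralizer ({b} : Set G) := by
      intro t ht
      rw [Subgroup.mem_centralizer_singleton_iff] at ht ⊢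
      have h1 : σ t * b ^ ε = b ^ ε * σ t := by
        have := congrArg σ ht
        rwa [map_mul, map_mul, hb] at this
      have hcomm : Commute (σ t) (b ^ ε) := h1
      have h2 := hcomm.zpow_right ε
      rwa [← zpow_mul, hεε, zpow_one] at h2
    have hσcmem : σ c₀ ∈ (fun t => c₀ * t) ''
        (Subgroup.centralizer ({b} : Set G) : Set G) := by
      refine ⟨c₀⁻¹ * σ c₀, ?_, by group⟩
      rw [SetLike.mem_coe, Subgroup.mem_centralizer_singleton_iff]
      have key : (c₀⁻¹ * σ c₀) * b * (c₀⁻¹ * σ c₀)⁻¹ = b := by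
        have h2 : c₀⁻¹ * b' * c₀ = b := by rw [← hc₀]; group
        calc (c₀⁻¹ * σ c₀) * b * (c₀⁻¹ * σ c₀)⁻¹
            = c₀⁻¹ * (σ c₀ * b * (σ c₀)⁻¹) * c₀ := by group
          _ = c₀⁻¹ * b' * c₀ := by rw [hσc₀]
          _ = b := h2
      calc (c₀⁻¹ * σ c₀) * b = ((c₀⁻¹ * σ c₀) * b * (c₀⁻¹ * σ c₀)⁻¹) * (c₀⁻¹ * σ c₀) := by
            group
        _ = b * (c₀⁻¹ * σ c₀) := by rw [key]
    have hHclosed : IsClosed ((Subgroup.centralizer ({b} : Set G) : Set G)) := by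
      have : (Subgroup.centralizer ({b} : Set G) : Set G) = {t | t * b = b * t} := by
        ext t
        simp only [SetLike.mem_coe, Subgroup.mem_centralizer_singleton_iff, Set.mem_setOf_eq]
      rw [this]
      exact isClosed_eq (continuous_id.mul continuous_const) (continuous_const.mul continuous_id)
    have hXclosed2 : IsClosed ((fun t => c₀ * t) ''
        (Subgroup.centralizer ({b} : Set G) : Set G)) :=
      ((hHclosed.isCompact).image (continuous_const.mul continuous_id)).isClosed
    have happ2 : ∀ N : Subgroup G, N.Normal → IsOpen (N : Set G) →
        ∃ x ∈ (fun t => c₀ * t) '' (Subgroup.centralizer ({b} : Set G) : Set G),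
          σ x * x⁻¹ ∈ N := by
      intro N hNn hNo
      obtain ⟨M, hMn, hMo, hMle, hMσ⟩ := shrinkInvariant σ hσcont hσ N hNn hNo
      obtain ⟨x, hx1, hx2⟩ := approx2 hodd hGpro σ hσ b c₀ hHσ hσcmem M hMn hMo hMσ
      exact ⟨x, hx1, hMle hx2⟩
    obtain ⟨d, hdX, hdfix⟩ := existsFixedOfApprox hXclosed2 hσcont happ2
    obtain ⟨t, ht, rfl⟩ := hdX
    refine ⟨c₀ * t, hdfix, ?_⟩
    rw [SetLike.mem_coe, Subgroup.mem_centralizer_singleton_iff] at ht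
    calc (c₀ * t) * b * (c₀ * t)⁻¹ = c₀ * (t * b * t⁻¹) * c₀⁻¹ := by group
      _ = c₀ * b * c₀⁻¹ := by rw [ht]; group
      _ = b' := hc₀
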